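/- arXiv:1009.3166 — 5 statements merged into one kernel-verified Lean document; each statement's English description precedes it below -/
import Mathlib

section
/- Let h > 1, R > 0, and define c_h = (1/2)^{1/(h-1)} ((h−1)/(h+1))^{h/(h−1)} and B(x,t) = c_h t^{−1/(2h)} [R^{(h+1)/h} − t^{−(h+1)/(2h²)} |x|^{(h+1)/h}]_+^{h/(h−1)} for x ∈ ℝ^d, t > 0. Then at every point (x,t) with x ≠ 0 and R^{(h+1)/h} − t^{−(h+1)/(2h²)}|x|^{(h+1)/h} > 0, B is C² and satisfies B_t = |DB|^{h-3} ⟨D²B DB, DB⟩. -/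
open Set

variable {d : ℕ}

-- The `h`-homogeneous infinity-Laplacian `Δ_∞^h f (x) = |Df|^{h-3} ⟨D²f Df, Df⟩`,
-- with the convention that it is `0` where the gradient vanishes.
open Classical in
noncomputable def infLapH (h : ℝ) (f : EuclideanSpace ℝ (Fin d) → ℝ)
    (x : EuclideanSpace ℝ (Fin d)) : ℝ :=
  if gradient f x = 0 then 0
  else ‖gradient f x‖ ^ (h - 3) *
    (inner ℝ ((fderiv ℝ (gradient f) x) (gradient f x)) (gradient f x) : ℝ)

-- `u` satisfies `u_t = Δ_∞^h u` at the point `p = (x,t)`.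
noncomputable def solvesAt (h : ℝ) (u : EuclideanSpace ℝ (Fin d) × ℝ → ℝ)
    (p : EuclideanSpace ℝ (Fin d) × ℝ) : Prop :=
  deriv (fun τ => u (p.1, τ)) p.2 = infLapH h (fun x => u (x, p.2)) p.1


noncomputable def barenblatt (h R : ℝ) (p : EuclideanSpace ℝ (Fin d) × ℝ) : ℝ :=
  ((1/2 : ℝ) ^ (1/(h-1)) * ((h-1)/(h+1)) ^ (h/(h-1))) * p.2 ^ (-(1/(2*h))) *
    (max (R ^ ((h+1)/h) - p.2 ^ (-((h+1)/(2*h^2))) * ‖p.1‖ ^ ((h+1)/h)) 0) ^ (h/(h-1))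


open Real Filter Topology

noncomputable def cB (h : ℝ) : ℝ := (1/2 : ℝ) ^ (1/(h-1)) * ((h-1)/(h+1)) ^ (h/(h-1))
noncomputable def AB (h R s t : ℝ) : ℝ :=
  R ^ ((h+1)/h) - t ^ (-((h+1)/(2*h^2))) * s ^ ((h+1)/(2*h))
noncomputable def QB (h R s t : ℝ) : ℝ := cB h * t ^ (-(1/(2*h))) * AB h R s t ^ (h/(h-1))
noncomputable def QBs (h R s t : ℝ) : ℝ :=
  -(cB h * (h/(h-1)) * ((h+1)/(2*h)) * (t ^ (-(1/(2*h))) * t ^ (-((h+1)/(2*h^2))))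
      * AB h R s t ^ (h/(h-1)-1) * s ^ ((h+1)/(2*h)-1))
noncomputable def QBss (h R s t : ℝ) : ℝ :=
  cB h * (h/(h-1)) * t ^ (-(1/(2*h))) *
    ( ((h/(h-1))-1) * AB h R s t ^ (h/(h-1)-1-1) * (t ^ (-((h+1)/(2*h^2))))^2
        * ((h+1)/(2*h))^2 * (s ^ ((h+1)/(2*h)-1))^2
      - AB h R s t ^ (h/(h-1)-1) * t ^ (-((h+1)/(2*h^2))) * ((h+1)/(2*h))
        * ((h+1)/(2*h)-1) * s ^ ((h+1)/(2*h)-1-1) )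
noncomputable def QBt (h R s t : ℝ) : ℝ :=
  cB h * (-(1/(2*h))) * t ^ (-(1/(2*h))-1) * AB h R s t ^ (h/(h-1))
  + cB h * (h/(h-1)) * ((h+1)/(2*h^2)) * (t ^ (-(1/(2*h))) * t ^ (-((h+1)/(2*h^2))-1))
      * s ^ ((h+1)/(2*h)) * AB h R s t ^ (h/(h-1)-1)

noncomputable def XB (h : ℝ) : ℝ := cB h * (h/(h-1)) * ((h+1)/(2*h))
noncomputable def VB (h : ℝ) : ℝ := cB h ^ (h-1) * ((h/(h-1)) ^ (h-1) * ((h+1)/h) ^ (h-1))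

lemma cB_pos {h : ℝ} (hh : 1 < h) : 0 < cB h := by
  have h1 : (0:ℝ) < h - 1 := by linarith
  have h2 : (0:ℝ) < h + 1 := by linarith
  exact mul_pos (rpow_pos_of_pos (by norm_num) _) (rpow_pos_of_pos (div_pos h1 h2) _)

lemma XB_pos {h : ℝ} (hh : 1 < h) : 0 < XB h := by
  have h1 : (0:ℝ) < h - 1 := by linarith
  have h0 : (0:ℝ) < h := by linarith
  have h2 : (0:ℝ) < h + 1 := by linarith
  exact mul_pos (mul_pos (cB_pos hh) (div_pos h0 h1)) (div_pos h2 (by linarith))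

lemma hV_key {h : ℝ} (hh : 1 < h) : VB h * ((h/(h-1))*((h+1)/h)) = 1/2 := by
  have h1 : (0:ℝ) < h - 1 := by linarith
  have h0 : (0:ℝ) < h := by linarith
  have h2 : (0:ℝ) < h + 1 := by linarith
  have hq : (0:ℝ) < (h-1)/(h+1) := div_pos h1 h2
  have e0 : cB h ^ (h-1)
      = (1/2 : ℝ) ^ ((1/(h-1))*(h-1)) * ((h-1)/(h+1)) ^ ((h/(h-1))*(h-1)) := by
    unfold cB
    rw [Real.mul_rpow (rpow_nonneg (by norm_num) _) (rpow_nonneg hq.le _),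
      ← Real.rpow_mul (by norm_num), ← Real.rpow_mul hq.le]
  have e1 : (1/(h-1))*(h-1) = 1 := by field_simp
  have e2 : (h/(h-1))*(h-1) = h := by field_simp
  have e3 : ((h-1)/(h+1)) ^ h = ((h-1)/(h+1)) ^ (h-1) * ((h-1)/(h+1)) := by
    rw [← Real.rpow_add_one hq.ne']; ring_nf
  have e4 : ((h-1)/(h+1)) ^ (h-1) * ((h/(h-1)) ^ (h-1) * ((h+1)/h) ^ (h-1))
      = (((h-1)/(h+1)) * ((h/(h-1)) * ((h+1)/h))) ^ (h-1) := by
    rw [Real.mul_rpow hq.le (by positivity), Real.mul_rpow (by positivity) (by positivity)]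
  have e5 : ((h-1)/(h+1)) * ((h/(h-1)) * ((h+1)/h)) = 1 := by field_simp
  have e6 : ((h-1)/(h+1)) * ((h/(h-1)) * ((h+1)/h)) = 1 := e5
  unfold VB
  rw [e0, e1, e2, Real.rpow_one, e3]
  calc (1/2 : ℝ) * (((h-1)/(h+1)) ^ (h-1) * ((h-1)/(h+1)))
        * ((h/(h-1)) ^ (h-1) * ((h+1)/h) ^ (h-1)) * ((h/(h-1))*((h+1)/h))
      = (1/2 : ℝ) * (((h-1)/(h+1)) ^ (h-1) * ((h/(h-1)) ^ (h-1) * ((h+1)/h) ^ (h-1)))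
        * (((h-1)/(h+1)) * ((h/(h-1))*((h+1)/h))) := by ring
    _ = 1/2 := by rw [e4, e5, Real.one_rpow]; norm_num

lemma step2 {h : ℝ} (hh : 1 < h) : 16*((2*XB h)^(h-3))*XB h^2 = 4*VB h := by
  have hX := XB_pos hh
  have hcB := cB_pos hh
  have h1 : (0:ℝ) < h - 1 := by linarith
  have h0 : (0:ℝ) < h := by linarith
  have e1 : XB h^(h-3)*XB h^2 = XB h^(h-1) := by
    rw [← Real.rpow_natCast (XB h) 2, ← Real.rpow_add hX, show h-3+((2:ℕ):ℝ) = h-1 by push_cast; ring]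
  have e2 : (2:ℝ)^(h-1) = 2^(h-3)*4 := by
    rw [show h-1 = h-3+2 by ring, Real.rpow_add (by norm_num)]; norm_num
  have e3 : XB h^(h-1) = cB h^(h-1)*((h/(h-1))^(h-1)*((h+1)/(2*h))^(h-1)) := by
    unfold XB
    rw [Real.mul_rpow (mul_nonneg hcB.le (by positivity)) (by positivity),
      Real.mul_rpow hcB.le (by positivity)]
    ring
  have e4 : (2:ℝ)^(h-1)*((h+1)/(2*h))^(h-1) = ((h+1)/h)^(h-1) := by
    rw [← Real.mul_rpow (by norm_num) (by positivity), show (2:ℝ)*((h+1)/(2*h)) = (h+1)/h by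
      field_simp]
  calc 16*((2*XB h)^(h-3))*XB h^2
      = 4*((2:ℝ)^(h-3)*4)*(XB h^(h-3)*XB h^2) := by
        rw [Real.mul_rpow (by norm_num) hX.le]; ring
    _ = 4*(2^(h-1))*(cB h^(h-1)*((h/(h-1))^(h-1)*((h+1)/(2*h))^(h-1))) := by rw [e1, e2, e3]
    _ = 4*(cB h^(h-1)*((h/(h-1))^(h-1)*((2:ℝ)^(h-1)*((h+1)/(2*h))^(h-1)))) := by ring
    _ = 4*VB h := by rw [e4]; rfl

lemma step1 {h : ℝ} (hh : 1 < h) : 8*((2*XB h)^(h-3))*XB h^3 = 2*VB h*XB h := by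
  have hX := XB_pos hh
  have h1 : (0:ℝ) < h - 1 := by linarith
  have h0 : (0:ℝ) < h := by linarith
  have e1 : XB h^(h-3)*XB h^3 = XB h^(h-1)*XB h := by
    rw [← Real.rpow_natCast (XB h) 3, ← Real.rpow_add hX, ← Real.rpow_add_one hX.ne',
      show h-3+((3:ℕ):ℝ) = h-1+1 by push_cast; ring]
  have e2 : (2:ℝ)^(h-1) = 2^(h-3)*4 := by
    rw [show h-1 = h-3+2 by ring, Real.rpow_add (by norm_num)]; norm_num
  have e3 : XB h^(h-1) = cB h^(h-1)*((h/(h-1))^(h-1)*((h+1)/(2*h))^(h-1)) := by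
    unfold XB
    rw [Real.mul_rpow (mul_nonneg (cB_pos hh).le (by positivity)) (by positivity),
      Real.mul_rpow (cB_pos hh).le (by positivity)]
    ring
  have e4 : (2:ℝ)^(h-1)*((h+1)/(2*h))^(h-1) = ((h+1)/h)^(h-1) := by
    rw [← Real.mul_rpow (by norm_num) (by positivity), show (2:ℝ)*((h+1)/(2*h)) = (h+1)/h by
      field_simp]
  calc 8*((2*XB h)^(h-3))*XB h^3
      = 2*((2:ℝ)^(h-3)*4)*(XB h^(h-3)*XB h^3) := by
        rw [Real.mul_rpow (by norm_num) hX.le]; ring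
    _ = 2*(2^(h-1))*(cB h^(h-1)*((h/(h-1))^(h-1)*((h+1)/(2*h))^(h-1))*XB h) := by
        rw [e1, e2, e3]
    _ = 2*(cB h^(h-1)*((h/(h-1))^(h-1)*((2:ℝ)^(h-1)*((h+1)/(2*h))^(h-1))))*XB h := by ring
    _ = 2*VB h*XB h := by rw [e4]; rfl

lemma hVval {h : ℝ} (hh : 1 < h) : VB h = 1/(2*((h/(h-1))*((h+1)/h))) := by
  have h1 : (0:ℝ) < h - 1 := by linarith
  have h0 : (0:ℝ) < h := by linarith
  have h2 : (0:ℝ) < h + 1 := by linarith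
  rw [eq_div_iff (ne_of_gt (mul_pos two_pos (mul_pos (div_pos h0 h1) (div_pos h2 h0))))]
  linear_combination 2*hV_key hh

lemma hK1 {h : ℝ} (hh : 1 < h) :
    -8*((2*XB h)^(h-3))*XB h^3 - 16*((2*XB h)^(h-3))*XB h^2*(cB h * (h/(h-1)) * ((h+1)/(2*h)) * ((h+1)/(2*h)-1))
      = cB h * (-(1/(2*h))) := by
  have h1 : (0:ℝ) < h - 1 := by linarith
  have h0 : (0:ℝ) < h := by linarith
  have e : -8*((2*XB h)^(h-3))*XB h^3 - 16*((2*XB h)^(h-3))*XB h^2*(cB h * (h/(h-1)) * ((h+1)/(2*h)) * ((h+1)/(2*h)-1))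
      = -(2*VB h*XB h) - (4*VB h)*(cB h * (h/(h-1)) * ((h+1)/(2*h)) * ((h+1)/(2*h)-1)) := by
    linear_combination (-1:ℝ)*step1 hh - (cB h * (h/(h-1)) * ((h+1)/(2*h)) * ((h+1)/(2*h)-1))*step2 hh
  rw [e, hVval hh]
  unfold XB
  field_simp
  ring

lemma hK2 {h : ℝ} (hh : 1 < h) :
    16*((2*XB h)^(h-3))*XB h^2*(cB h * (h/(h-1)) * (((h/(h-1))-1) * ((h+1)/(2*h))^2))
      = cB h * ((h/(h-1)) * ((h+1)/(2*h^2))) := by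
  have h1 : (0:ℝ) < h - 1 := by linarith
  have h0 : (0:ℝ) < h := by linarith
  have e : 16*((2*XB h)^(h-3))*XB h^2*(cB h * (h/(h-1)) * (((h/(h-1))-1) * ((h+1)/(2*h))^2))
      = (4*VB h)*(cB h * (h/(h-1)) * (((h/(h-1))-1) * ((h+1)/(2*h))^2)) := by
    linear_combination (cB h * (h/(h-1)) * (((h/(h-1))-1) * ((h+1)/(2*h))^2))*step2 hh
  rw [e, hVval hh]
  field_simp
  ring


lemma hK1x {h : ℝ} (hh : 1 < h) :
    -8*((2*(cB h * (h/(h-1)) * ((h+1)/(2*h))))^(h-3))*(cB h * (h/(h-1)) * ((h+1)/(2*h)))^3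
    - 16*((2*(cB h * (h/(h-1)) * ((h+1)/(2*h))))^(h-3))*(cB h * (h/(h-1)) * ((h+1)/(2*h)))^2
        *(cB h * (h/(h-1)) * ((h+1)/(2*h)) * ((h+1)/(2*h)-1))
      = cB h * (-(1/(2*h))) := by
  have := hK1 hh; unfold XB at this; exact this

lemma hK2x {h : ℝ} (hh : 1 < h) :
    16*((2*(cB h * (h/(h-1)) * ((h+1)/(2*h))))^(h-3))*(cB h * (h/(h-1)) * ((h+1)/(2*h)))^2
        *(cB h * (h/(h-1)) * (((h/(h-1))-1) * ((h+1)/(2*h))^2))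
      = cB h * ((h/(h-1)) * ((h+1)/(2*h^2))) := by
  have := hK2 hh; unfold XB at this; exact this

lemma hasDerivAt_QB_s (h R s t : ℝ) (hs : s ≠ 0) (hA : AB h R s t ≠ 0) :
    HasDerivAt (fun σ => QB h R σ t) (QBs h R s t) s := by
  have h1 : HasDerivAt (fun σ : ℝ => σ ^ ((h+1)/(2*h))) (((h+1)/(2*h)) * s ^ ((h+1)/(2*h)-1)) s :=
    Real.hasDerivAt_rpow_const (Or.inl hs)
  have h3 : HasDerivAt (fun σ => AB h R σ t)
      (-(t ^ (-((h+1)/(2*h^2))) * (((h+1)/(2*h)) * s ^ ((h+1)/(2*h)-1)))) s :=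
    (h1.const_mul _).const_sub _
  have h4 := h3.rpow_const (p := h/(h-1)) (Or.inl hA)
  have h5 := h4.const_mul (cB h * t ^ (-(1/(2*h))))
  refine h5.congr_deriv ?_
  unfold QBs
  ring

lemma hasDerivAt_QB_ss (h R s t : ℝ) (hs : s ≠ 0) (hA : AB h R s t ≠ 0) :
    HasDerivAt (fun σ => QBs h R σ t) (QBss h R s t) s := by
  have h1 : HasDerivAt (fun σ : ℝ => σ ^ ((h+1)/(2*h)-1)) (((h+1)/(2*h)-1) * s ^ ((h+1)/(2*h)-1-1)) s :=
    Real.hasDerivAt_rpow_const (Or.inl hs)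
  have h1' : HasDerivAt (fun σ : ℝ => σ ^ ((h+1)/(2*h))) (((h+1)/(2*h)) * s ^ ((h+1)/(2*h)-1)) s :=
    Real.hasDerivAt_rpow_const (Or.inl hs)
  have h3 : HasDerivAt (fun σ => AB h R σ t)
      (-(t ^ (-((h+1)/(2*h^2))) * (((h+1)/(2*h)) * s ^ ((h+1)/(2*h)-1)))) s :=
    ((h1'.const_mul _).const_sub _)
  have h4 := h3.rpow_const (p := h/(h-1)-1) (Or.inl hA)
  have hg : HasDerivAt (fun σ : ℝ => -(t ^ (-((h+1)/(2*h^2))) * (((h+1)/(2*h)) * σ ^ ((h+1)/(2*h)-1))))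
      (-(t ^ (-((h+1)/(2*h^2))) * (((h+1)/(2*h)) * (((h+1)/(2*h)-1) * s ^ ((h+1)/(2*h)-1-1))))) s :=
    ((h1.const_mul ((h+1)/(2*h))).const_mul (t ^ (-((h+1)/(2*h^2))))).neg
  have h6 := (h4.mul hg).const_mul (cB h * (h/(h-1)) * (t ^ (-(1/(2*h)))))
  have heq : (fun σ => QBs h R σ t) = fun σ =>
      (cB h * (h/(h-1)) * (t ^ (-(1/(2*h))))) *
        ((AB h R σ t ^ (h/(h-1)-1)) *
          (-(t ^ (-((h+1)/(2*h^2))) * (((h+1)/(2*h)) * σ ^ ((h+1)/(2*h)-1))))) := by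
    funext σ; unfold QBs; ring
  rw [heq]
  refine h6.congr_deriv ?_
  unfold QBss
  ring

lemma hasDerivAt_QB_t (h R s t : ℝ) (ht : t ≠ 0) (hA : AB h R s t ≠ 0) :
    HasDerivAt (fun τ => QB h R s τ) (QBt h R s t) t := by
  have h1 : HasDerivAt (fun τ : ℝ => τ ^ (-(1/(2*h)))) ((-(1/(2*h))) * t ^ (-(1/(2*h))-1)) t :=
    Real.hasDerivAt_rpow_const (Or.inl ht)
  have h2 : HasDerivAt (fun τ : ℝ => τ ^ (-((h+1)/(2*h^2))))
      ((-((h+1)/(2*h^2))) * t ^ (-((h+1)/(2*h^2))-1)) t :=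
    Real.hasDerivAt_rpow_const (Or.inl ht)
  have h3 : HasDerivAt (fun τ => AB h R s τ)
      (-(((-((h+1)/(2*h^2))) * t ^ (-((h+1)/(2*h^2))-1)) * s ^ ((h+1)/(2*h)))) t :=
    (h2.mul_const _).const_sub _
  have h4 := h3.rpow_const (p := h/(h-1)) (Or.inl hA)
  have h6 := (h1.const_mul (cB h)).mul h4
  have heq : (fun τ => QB h R s τ) = fun τ =>
      (cB h * τ ^ (-(1/(2*h)))) * (AB h R s τ ^ (h/(h-1))) := by
    funext τ; unfold QB; ring
  rw [heq]
  refine h6.congr_deriv ?_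
  unfold QBt
  ring

lemma key_alg (h R t r : ℝ) (hh : 1 < h) (ht : 0 < t) (hr : 0 < r)
    (hA0 : 0 < AB h R (r^2) t) :
    QBt h R (r^2) t = (2 * -QBs h R (r^2) t * r) ^ (h-3) *
      (8*(QBs h R (r^2) t)^3*r^2 + 16*(QBs h R (r^2) t)^2*(QBss h R (r^2) t)*(r^2)^2) := by
  have h0 : (0:ℝ) < h := by linarith
  have h1 : (0:ℝ) < h-1 := by linarith
  have h0' : h ≠ 0 := h0.ne'
  have h1' : h-1 ≠ 0 := h1.ne'
  have hcB := cB_pos hh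
  obtain ⟨la, hlA⟩ : ∃ a, AB h R (r^2) t = Real.exp a := ⟨_, (Real.exp_log hA0).symm⟩
  obtain ⟨lt', rfl⟩ : ∃ a, t = Real.exp a := ⟨_, (Real.exp_log ht).symm⟩
  obtain ⟨lr, rfl⟩ : ∃ a, r = Real.exp a := ⟨_, (Real.exp_log hr).symm⟩
  set W : ℝ := lt'*(-(1/(2*h))) + lt'*(-((h+1)/(2*h^2))) + la*(h/(h-1)-1)
      + (2*lr)*((h+1)/(2*h)-1) + lr with hW
  have hbase0 : (Real.exp lt'^(-(1/(2*h))) * Real.exp lt'^(-((h+1)/(2*h^2))))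
      * (Real.exp la^(h/(h-1)-1) * ((Real.exp lr^2)^((h+1)/(2*h)-1) * Real.exp lr))
      = Real.exp W := by
    simp only [← Real.exp_mul, ← Real.exp_nat_mul, ← Real.exp_add]
    rw [Real.exp_eq_exp, hW]
    push_cast
    ring
  have hbase : 2 * -QBs h R (Real.exp lr^2) (Real.exp lt') * Real.exp lr
      = (2*(cB h * (h/(h-1)) * ((h+1)/(2*h)))) * Real.exp W := by
    unfold QBs; rw [hlA]
    linear_combination (2*(cB h * (h/(h-1)) * ((h+1)/(2*h))))*hbase0
  have Hpow : (2 * -QBs h R (Real.exp lr^2) (Real.exp lt') * Real.exp lr) ^ (h-3)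
      = (2*(cB h * (h/(h-1)) * ((h+1)/(2*h))))^(h-3) * Real.exp (W*(h-3)) := by
    rw [hbase, Real.mul_rpow (by positivity) (Real.exp_pos _).le, Real.exp_mul]
  have ma : Real.exp (W*(h-3)) *
      ((Real.exp lt'^(-(1/(2*h))) * Real.exp lt'^(-((h+1)/(2*h^2))))^3
        * (Real.exp la^(h/(h-1)-1))^3 * ((Real.exp lr^2)^((h+1)/(2*h)-1))^3 * Real.exp lr^2)
      = Real.exp lt'^(-(1/(2*h))-1) * Real.exp la^(h/(h-1)) := by
    simp only [mul_pow, ← Real.exp_mul, ← Real.exp_nat_mul, ← Real.exp_add]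
    rw [Real.exp_eq_exp, hW]
    push_cast
    field_simp
    ring
  have mb : Real.exp (W*(h-3)) *
      ((Real.exp lt'^(-(1/(2*h))) * Real.exp lt'^(-((h+1)/(2*h^2))))^2
        * (Real.exp la^(h/(h-1)-1))^2 * ((Real.exp lr^2)^((h+1)/(2*h)-1))^2
        * (Real.exp lt'^(-(1/(2*h))) * (Real.exp la^(h/(h-1)-1-1)
            * ((Real.exp lt'^(-((h+1)/(2*h^2))))^2 * ((Real.exp lr^2)^((h+1)/(2*h)-1))^2)))
        * (Real.exp lr^2)^2)
      = (Real.exp lt'^(-(1/(2*h))) * Real.exp lt'^(-((h+1)/(2*h^2))-1))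
        * (Real.exp lr^2)^((h+1)/(2*h)) * Real.exp la^(h/(h-1)-1) := by
    simp only [mul_pow, ← Real.exp_mul, ← Real.exp_nat_mul, ← Real.exp_add]
    rw [Real.exp_eq_exp, hW]
    push_cast
    field_simp
    ring
  have mc : Real.exp (W*(h-3)) *
      ((Real.exp lt'^(-(1/(2*h))) * Real.exp lt'^(-((h+1)/(2*h^2))))^2
        * (Real.exp la^(h/(h-1)-1))^2 * ((Real.exp lr^2)^((h+1)/(2*h)-1))^2
        * (Real.exp lt'^(-(1/(2*h))) * (Real.exp la^(h/(h-1)-1)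
            * (Real.exp lt'^(-((h+1)/(2*h^2))) * (Real.exp lr^2)^((h+1)/(2*h)-1-1))))
        * (Real.exp lr^2)^2)
      = Real.exp lt'^(-(1/(2*h))-1) * Real.exp la^(h/(h-1)) := by
    simp only [mul_pow, ← Real.exp_mul, ← Real.exp_nat_mul, ← Real.exp_add]
    rw [Real.exp_eq_exp, hW]
    push_cast
    field_simp
    ring
  rw [Hpow]
  unfold QBt QBs QBss
  rw [hlA]
  linear_combination
    (8*((2*(cB h * (h/(h-1)) * ((h+1)/(2*h))))^(h-3))*(cB h * (h/(h-1)) * ((h+1)/(2*h)))^3)*ma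
    + (-16*((2*(cB h * (h/(h-1)) * ((h+1)/(2*h))))^(h-3))*(cB h * (h/(h-1)) * ((h+1)/(2*h)))^2
        *(cB h * (h/(h-1)) * (((h/(h-1))-1) * ((h+1)/(2*h))^2)))*mb
    + (16*((2*(cB h * (h/(h-1)) * ((h+1)/(2*h))))^(h-3))*(cB h * (h/(h-1)) * ((h+1)/(2*h)))^2
        *(cB h * (h/(h-1)) * ((h+1)/(2*h)) * ((h+1)/(2*h)-1)))*mc
    + (-(Real.exp lt'^(-(1/(2*h))-1) * Real.exp la^(h/(h-1))))*(hK1x hh)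
    + (-((Real.exp lt'^(-(1/(2*h))) * Real.exp lt'^(-((h+1)/(2*h^2))-1))
        * (Real.exp lr^2)^((h+1)/(2*h)) * Real.exp la^(h/(h-1)-1)))*(hK2x hh)

lemma sq_rpow {h : ℝ} (hne : h ≠ 0) (u : ℝ) (hu : 0 ≤ u) :
    (u^2)^((h+1)/(2*h)) = u^((h+1)/h) := by
  rw [← Real.rpow_natCast u 2, ← Real.rpow_mul hu,
    show ((2:ℕ):ℝ)*((h+1)/(2*h)) = (h+1)/h by push_cast; field_simp]

lemma QBs_neg {h R s t : ℝ} (hh : 1 < h) (hs : 0 < s) (ht : 0 < t)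
    (hA : 0 < AB h R s t) : QBs h R s t < 0 := by
  have hcB := cB_pos hh
  have h0 : (0:ℝ) < h := by linarith
  have h1 : (0:ℝ) < h-1 := by linarith
  have : 0 < cB h * (h/(h-1)) * ((h+1)/(2*h)) * (t ^ (-(1/(2*h))) * t ^ (-((h+1)/(2*h^2))))
      * AB h R s t ^ (h/(h-1)-1) * s ^ ((h+1)/(2*h)-1) := by positivity
  unfold QBs
  linarith

variable {d : ℕ}

lemma normsq_hasFDerivAt (y : EuclideanSpace ℝ (Fin d)) :
    HasFDerivAt (fun z : EuclideanSpace ℝ (Fin d) => ‖z‖^2) ((2:ℝ) • (innerSL ℝ y)) y := by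
  have h := (hasFDerivAt_id y).inner ℝ (hasFDerivAt_id y)
  have h1 : (fun z : EuclideanSpace ℝ (Fin d) => ‖z‖^2)
      = fun z => (inner ℝ z z : ℝ) := funext fun z => (real_inner_self_eq_norm_sq z).symm
  rw [h1]
  refine h.congr_fderiv ?_
  ext w
  simp only [ContinuousLinearMap.smul_apply, innerSL_apply_apply, ContinuousLinearMap.comp_apply,
    ContinuousLinearMap.prod_apply, ContinuousLinearMap.id_apply, fderivInnerCLM_apply, id,
    smul_eq_mul]
  rw [real_inner_comm]
  ring

lemma grad_rep (h R t : ℝ) (y : EuclideanSpace ℝ (Fin d)) (hy : y ≠ 0)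
    (hA : AB h R (‖y‖^2) t ≠ 0) :
    HasGradientAt (fun z : EuclideanSpace ℝ (Fin d) => QB h R (‖z‖^2) t)
      ((2 * QBs h R (‖y‖^2) t) • y) y := by
  have hs := hasDerivAt_QB_s h R (‖y‖^2) t (pow_ne_zero 2 (norm_ne_zero_iff.mpr hy)) hA
  have hcomp := hs.comp_hasFDerivAt y (normsq_hasFDerivAt y)
  rw [hasGradientAt_iff_hasFDerivAt]
  refine hcomp.congr_fderiv ?_
  ext w
  simp [InnerProductSpace.toDual_apply_apply, real_inner_smul_left]
  ring


theorem stmt_5 (h R : ℝ) (hh : 1 < h) (hR : 0 < R)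
    (x : EuclideanSpace ℝ (Fin d)) (t : ℝ) (hx : x ≠ 0) (ht : 0 < t)
    (hA : 0 < R ^ ((h+1)/h) - t ^ (-((h+1)/(2*h^2))) * ‖x‖ ^ ((h+1)/h)) :
    ContDiffAt ℝ 2 (barenblatt h R) (x, t) ∧ solvesAt h (barenblatt h R) (x, t) := by
  have h0 : (0:ℝ) < h := by linarith
  have h1 : (0:ℝ) < h-1 := by linarith
  have hnx : ‖x‖ ≠ 0 := norm_ne_zero_iff.mpr hx
  have hnx0 : (0:ℝ) < ‖x‖ := norm_pos_iff.mpr hx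
  have hA0 : 0 < AB h R (‖x‖^2) t := by
    unfold AB; rw [sq_rpow h0.ne' ‖x‖ (norm_nonneg x)]; exact hA
  -- eventual equality with smooth representative
  have hcont : ContinuousAt (fun p : (EuclideanSpace ℝ (Fin d)) × ℝ =>
      R ^ ((h+1)/h) - p.2 ^ (-((h+1)/(2*h^2))) * ‖p.1‖ ^ ((h+1)/h)) (x, t) := by
    refine continuousAt_const.sub (ContinuousAt.mul ?_ ?_)
    · exact continuousAt_snd.rpow_const (Or.inl ht.ne')
    · exact (continuous_fst.norm.continuousAt).rpow_const (Or.inr (by positivity))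
  have ev1 : ∀ᶠ p in 𝓝 (x,t),
      0 < R ^ ((h+1)/h) - p.2 ^ (-((h+1)/(2*h^2))) * ‖p.1‖ ^ ((h+1)/h) := by
    have := hcont.preimage_mem_nhds (Ioi_mem_nhds hA)
    filter_upwards [this] with p hp
    exact hp
  have ev2 : ∀ᶠ p in 𝓝 (x,t), (0:ℝ) < p.2 := by
    have := (continuousAt_snd :
      ContinuousAt (Prod.snd) ((x,t) : (EuclideanSpace ℝ (Fin d)) × ℝ)).preimage_mem_nhds
      (Ioi_mem_nhds ht)
    filter_upwards [this] with p hp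
    exact hp
  have ev : barenblatt h R =ᶠ[𝓝 (x,t)] fun p => QB h R (‖p.1‖^2) p.2 := by
    filter_upwards [ev1, ev2] with p h1p h2p
    unfold barenblatt QB AB cB
    rw [sq_rpow h0.ne' ‖p.1‖ (norm_nonneg _), max_eq_left (le_of_lt h1p)]
  constructor
  · -- smoothness
    have c1 : ContDiffAt ℝ 2 (fun q : ℝ × ℝ => q.2 ^ (-(1/(2*h)))) (‖x‖^2, t) :=
      contDiffAt_snd.rpow_const_of_ne ht.ne'
    have c2 : ContDiffAt ℝ 2 (fun q : ℝ × ℝ => q.1 ^ ((h+1)/(2*h))) (‖x‖^2, t) :=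
      contDiffAt_fst.rpow_const_of_ne (by positivity)
    have c3 : ContDiffAt ℝ 2 (fun q : ℝ × ℝ => q.2 ^ (-((h+1)/(2*h^2)))) (‖x‖^2, t) :=
      contDiffAt_snd.rpow_const_of_ne ht.ne'
    have c4 : ContDiffAt ℝ 2 (fun q : ℝ × ℝ =>
        R ^ ((h+1)/h) - q.2 ^ (-((h+1)/(2*h^2))) * q.1 ^ ((h+1)/(2*h))) (‖x‖^2, t) :=
      contDiffAt_const.sub (c3.mul c2)
    have c5 : ContDiffAt ℝ 2 (fun q : ℝ × ℝ =>
        (R ^ ((h+1)/h) - q.2 ^ (-((h+1)/(2*h^2))) * q.1 ^ ((h+1)/(2*h))) ^ (h/(h-1)))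
        (‖x‖^2, t) := c4.rpow_const_of_ne hA0.ne'
    have hout : ContDiffAt ℝ 2 (fun q : ℝ × ℝ => QB h R q.1 q.2) (‖x‖^2, t) := by
      unfold QB AB
      exact (contDiffAt_const.mul c1).mul c5
    have hin : ContDiffAt ℝ 2
        (fun p : (EuclideanSpace ℝ (Fin d)) × ℝ => ((‖p.1‖^2 : ℝ), p.2)) (x,t) :=
      (((contDiff_norm_sq ℝ).comp contDiff_fst).contDiffAt).prodMk contDiffAt_snd
    have htot := hout.comp (x,t) hin
    exact htot.congr_of_eventuallyEq ev
  · -- the PDE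
    show deriv (fun τ => barenblatt h R (x, τ)) t
      = infLapH h (fun y => barenblatt h R (y, t)) x
    have evt : (fun τ => barenblatt h R (x, τ)) =ᶠ[𝓝 t] fun τ => QB h R (‖x‖^2) τ :=
      ev.comp_tendsto ((continuous_const.prodMk continuous_id).tendsto t)
    have evx : (fun y => barenblatt h R (y, t)) =ᶠ[𝓝 x] fun y => QB h R (‖y‖^2) t :=
      ev.comp_tendsto ((continuous_id.prodMk continuous_const).tendsto x)
    have hcont2 : ContinuousAt (fun y : EuclideanSpace ℝ (Fin d) => AB h R (‖y‖^2) t) x := by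
      unfold AB
      refine continuousAt_const.sub (ContinuousAt.mul continuousAt_const ?_)
      exact ((continuous_norm.pow 2).continuousAt).rpow_const
        (Or.inl (pow_ne_zero 2 hnx))
    have evAB : ∀ᶠ y in 𝓝 x, 0 < AB h R (‖y‖^2) t ∧ y ≠ 0 := by
      have e1 := hcont2.preimage_mem_nhds (Ioi_mem_nhds hA0)
      filter_upwards [e1, eventually_ne_nhds hx] with y hy1 hy2
      exact ⟨hy1, hy2⟩
    have evgrad : gradient (fun y => barenblatt h R (y, t)) =ᶠ[𝓝 x]
        fun y => (2 * QBs h R (‖y‖^2) t) • y := by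
      refine (evx.gradient).trans ?_
      filter_upwards [evAB] with y hy
      exact (grad_rep h R t y hy.2 hy.1.ne').gradient
    have hgradx : gradient (fun y => barenblatt h R (y, t)) x
        = (2 * QBs h R (‖x‖^2) t) • x := by
      have := evgrad.self_of_nhds
      simpa using this
    have hQsneg : QBs h R (‖x‖^2) t < 0 := QBs_neg hh (by positivity) ht hA0
    have hvne : (2 * QBs h R (‖x‖^2) t) • x ≠ 0 :=
      smul_ne_zero (mul_ne_zero two_ne_zero hQsneg.ne) hx
    have hc : HasFDerivAt (fun z : EuclideanSpace ℝ (Fin d) => 2 * QBs h R (‖z‖^2) t)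
        ((2 * QBss h R (‖x‖^2) t) • ((2:ℝ) • innerSL ℝ x)) x :=
      by have := ((hasDerivAt_QB_ss h R (‖x‖^2) t (pow_ne_zero 2 hnx) hA0.ne').const_mul
        2).comp_hasFDerivAt x (normsq_hasFDerivAt x); exact this
    have hφ : HasFDerivAt (fun z : EuclideanSpace ℝ (Fin d) => (2 * QBs h R (‖z‖^2) t) • z)
        ((2 * QBs h R (‖x‖^2) t) • ContinuousLinearMap.id ℝ (EuclideanSpace ℝ (Fin d)) +
          ((2 * QBss h R (‖x‖^2) t) • ((2:ℝ) • innerSL ℝ x)).smulRight x) x :=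
      hc.smul (hasFDerivAt_id x)
    have hfd : fderiv ℝ (gradient (fun y => barenblatt h R (y, t))) x
        = (2 * QBs h R (‖x‖^2) t) • ContinuousLinearMap.id ℝ (EuclideanSpace ℝ (Fin d)) +
          ((2 * QBss h R (‖x‖^2) t) • ((2:ℝ) • innerSL ℝ x)).smulRight x :=
      evgrad.fderiv_eq.trans hφ.fderiv
    have hval : (inner ℝ ((fderiv ℝ (gradient (fun y => barenblatt h R (y, t))) x)
          ((2 * QBs h R (‖x‖^2) t) • x)) ((2 * QBs h R (‖x‖^2) t) • x) : ℝ)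
        = 8*(QBs h R (‖x‖^2) t)^3*(‖x‖^2)
          + 16*(QBs h R (‖x‖^2) t)^2*(QBss h R (‖x‖^2) t)*((‖x‖^2))^2 := by
      rw [hfd]
      simp only [ContinuousLinearMap.add_apply, ContinuousLinearMap.smul_apply,
        ContinuousLinearMap.smulRight_apply, ContinuousLinearMap.id_apply, innerSL_apply_apply,
        real_inner_smul_left, real_inner_smul_right, inner_add_left, smul_eq_mul,
        real_inner_self_eq_norm_sq]
      ring
    have hnorm : ‖(2 * QBs h R (‖x‖^2) t) • x‖ = 2 * -QBs h R (‖x‖^2) t * ‖x‖ := by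
      rw [norm_smul, Real.norm_eq_abs, abs_of_neg (by linarith : 2 * QBs h R (‖x‖^2) t < 0)]
      ring
    rw [evt.deriv_eq, (hasDerivAt_QB_t h R (‖x‖^2) t ht.ne' hA0.ne').deriv]
    unfold infLapH
    rw [hgradx, if_neg hvne, hval, hnorm]
    exact key_alg h R t ‖x‖ hh ht hnx0 hA0
end

section
/- Let h > 1, R > 0, and let B_{R,h} be the Barenblatt function B_{R,h}(x,t) = c_h t^{−1/(2h)}[R^{(h+1)/h} − t^{−(h+1)/(2h²)}|x|^{(h+1)/h}]_+^{h/(h−1)} with c_h = (1/2)^{1/(h−1)}((h−1)/(h+1))^{h/(h−1)}. Then B_{R,h} is C¹ on ℝ^d × (0,∞) and its spatial gradient vanishes on the set W = {(x,t) : x = 0 or R^{(h+1)/h} = t^{−(h+1)/(2h²)}|x|^{(h+1)/h}}. -/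
open Set

variable {d : ℕ}

section Aux
open Real Filter Asymptotics Topology

lemma phi_hasDerivAt {γ : ℝ} (hγ : 1 < γ) (s : ℝ) :
    HasDerivAt (fun u : ℝ => max u 0 ^ γ) (γ * max s 0 ^ (γ - 1)) s := by
  rcases lt_trichotomy s 0 with hs | hs | hs
  · have hz : γ * max s 0 ^ (γ - 1) = 0 := by
      rw [max_eq_right hs.le, Real.zero_rpow (by linarith)]; ring
    rw [hz]
    apply HasDerivAt.congr_of_eventuallyEq (hasDerivAt_const s 0)
    filter_upwards [eventually_lt_nhds hs] with u hu
    rw [max_eq_right hu.le, Real.zero_rpow (by linarith)]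
  · subst hs
    have hz : γ * max (0:ℝ) 0 ^ (γ - 1) = 0 := by
      rw [max_self, Real.zero_rpow (by linarith)]; ring
    rw [hz, hasDerivAt_iff_isLittleO]
    simp only [sub_zero, max_self, Real.zero_rpow (by linarith : γ ≠ 0), smul_zero, sub_zero]
    rw [isLittleO_iff]
    intro c hc
    have h1 : Tendsto (fun u : ℝ => |u| ^ (γ - 1)) (𝓝 0) (𝓝 0) := by
      have h2 : Tendsto (fun u : ℝ => |u|) (𝓝 0) (𝓝 0) := by
        simpa using (continuous_abs.tendsto (0:ℝ))
      have h3 : ContinuousAt (fun v : ℝ => v ^ (γ - 1)) 0 :=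
        Real.continuousAt_rpow_const 0 _ (Or.inr (by linarith))
      have := h3.tendsto.comp h2
      simpa [Function.comp_def, Real.zero_rpow (show γ - 1 ≠ 0 by linarith)] using this
    filter_upwards [h1.eventually_le_const hc] with u hu
    rcases eq_or_ne u 0 with rfl | hu0
    · simp [Real.zero_rpow (show γ ≠ 0 by linarith)]
    · have hb : (0:ℝ) ≤ max u 0 := le_max_right _ _
      have h4 : max u 0 ^ γ ≤ |u| ^ γ :=
        Real.rpow_le_rpow hb (max_le (le_abs_self u) (abs_nonneg u)) (by linarith)
      have h5 : |u| ^ γ = |u| ^ (γ - 1) * |u| := by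
        rw [← Real.rpow_add_one (abs_ne_zero.mpr hu0)]; ring_nf
      calc ‖max u 0 ^ γ‖ = max u 0 ^ γ := by
            rw [Real.norm_eq_abs, abs_of_nonneg (Real.rpow_nonneg hb γ)]
        _ ≤ |u| ^ (γ - 1) * |u| := by rw [← h5]; exact h4
        _ ≤ c * ‖u‖ := by
            rw [Real.norm_eq_abs]
            exact mul_le_mul_of_nonneg_right hu (abs_nonneg _)
  · have := Real.hasDerivAt_rpow_const (x := s) (p := γ) (Or.inl hs.ne')
    rw [show s ^ (γ - 1) = max s 0 ^ (γ - 1) by rw [max_eq_left hs.le]] at this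
    apply this.congr_of_eventuallyEq
    filter_upwards [eventually_gt_nhds hs] with u hu
    rw [max_eq_left hu.le]

lemma phi_contDiff {γ : ℝ} (hγ : 1 < γ) : ContDiff ℝ 1 (fun u : ℝ => max u 0 ^ γ) := by
  rw [contDiff_one_iff_deriv]
  refine ⟨fun s => (phi_hasDerivAt hγ s).differentiableAt, ?_⟩
  have hd : deriv (fun u : ℝ => max u 0 ^ γ) = fun s => γ * max s 0 ^ (γ - 1) :=
    funext fun s => (phi_hasDerivAt hγ s).deriv
  rw [hd]
  apply continuous_const.mul
  rw [continuous_iff_continuousAt]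
  intro s
  exact (Real.continuousAt_rpow_const _ _ (Or.inr (by linarith))).comp
    (continuous_id.max continuous_const).continuousAt

end Aux

theorem stmt_6 (h R : ℝ) (hh : 1 < h) (hR : 0 < R)
    (x : EuclideanSpace ℝ (Fin d)) (t : ℝ) (ht : 0 < t) :
    ContDiffAt ℝ 1 (barenblatt h R) (x, t) ∧
    ((x = 0 ∨ R ^ ((h+1)/h) = t ^ (-((h+1)/(2*h^2))) * ‖x‖ ^ ((h+1)/h)) →
      gradient (fun y => barenblatt h R (y, t)) x = 0) := by
  have hh0 : 0 < h := by linarith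
  have hα : 1 < (h+1)/h := (one_lt_div hh0).mpr (by linarith)
  have hγ : 1 < h/(h-1) := (one_lt_div (by linarith)).mpr (by linarith)
  set α := (h+1)/h with hαdef
  set γ := h/(h-1) with hγdef
  set C : ℝ := (1/2 : ℝ) ^ (1/(h-1)) * ((h-1)/(h+1)) ^ γ with hCdef
  constructor
  · -- C¹ regularity
    have c1 : ContDiffAt ℝ 1 (fun p : EuclideanSpace ℝ (Fin d) × ℝ => p.2 ^ (-(1/(2*h)))) (x, t) :=
      (Real.contDiffAt_rpow_const_of_ne ht.ne').comp (x, t) contDiffAt_snd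
    have c2 : ContDiffAt ℝ 1 (fun p : EuclideanSpace ℝ (Fin d) × ℝ => p.2 ^ (-((h+1)/(2*h^2)))) (x, t) :=
      (Real.contDiffAt_rpow_const_of_ne ht.ne').comp (x, t) contDiffAt_snd
    have c3 : ContDiffAt ℝ 1 (fun p : EuclideanSpace ℝ (Fin d) × ℝ => ‖p.1‖ ^ α) (x, t) :=
      ((contDiff_norm_rpow hα).contDiffAt).comp (x, t) contDiffAt_fst
    have cin : ContDiffAt ℝ 1
        (fun p : EuclideanSpace ℝ (Fin d) × ℝ => R ^ α - p.2 ^ (-((h+1)/(2*h^2))) * ‖p.1‖ ^ α) (x, t) :=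
      contDiffAt_const.sub (c2.mul c3)
    have cout : ContDiffAt ℝ 1
        ((fun u : ℝ => max u 0 ^ γ) ∘
          (fun p : EuclideanSpace ℝ (Fin d) × ℝ => R ^ α - p.2 ^ (-((h+1)/(2*h^2))) * ‖p.1‖ ^ α)) (x, t) :=
      (phi_contDiff hγ).comp_contDiffAt (x, t) cin
    exact ((contDiffAt_const (c := C)).mul c1).mul cout
  · -- gradient vanishes on W
    intro hcase
    set c : ℝ := t ^ (-((h+1)/(2*h^2))) with hcdef
    set K : ℝ := C * t ^ (-(1/(2*h))) with hKdef
    set g : EuclideanSpace ℝ (Fin d) → ℝ := fun y => R ^ α - c * ‖y‖ ^ α with hgdef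
    have hg : HasFDerivAt g (0 - c • ((α * ‖x‖ ^ (α - 2)) • innerSL ℝ x)) x :=
      (hasFDerivAt_const _ _).sub ((hasFDerivAt_norm_rpow x hα).const_mul c)
    have key : HasFDerivAt (fun y : EuclideanSpace ℝ (Fin d) => barenblatt h R (y, t))
        (K • ((γ * max (g x) 0 ^ (γ - 1)) •
          (0 - c • ((α * ‖x‖ ^ (α - 2)) • innerSL ℝ x)))) x :=
      (((phi_hasDerivAt hγ (g x)).comp_hasFDerivAt x hg).const_mul K)
    have hzero : (K • ((γ * max (g x) 0 ^ (γ - 1)) •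
        (0 - c • ((α * ‖x‖ ^ (α - 2)) • innerSL ℝ x)))) = 0 := by
      rcases hcase with rfl | hb
      · simp
      · have hgx : g x = 0 := by
          show R ^ α - c * ‖x‖ ^ α = 0
          rw [hb]; ring
        rw [hgx, max_self, Real.zero_rpow (by linarith : γ - 1 ≠ 0), mul_zero, zero_smul,
          smul_zero]
    rw [hzero] at key
    have hgrad : HasGradientAt (fun y : EuclideanSpace ℝ (Fin d) => barenblatt h R (y, t)) 0 x := by
      rw [hasGradientAt_iff_hasFDerivAt]
      simpa using key
    exact hgrad.gradient
end

section
/- Let h > 1, α = (h−1)/(h+1), κ^{h+1} = 2α, and let s : [0,R̄] → [0,π] be the inverse of r(s) = κ∫₀^s (sin σ)^α dσ. Define X_*(r) = cos(s(r)). Then X_* is C¹ on [0,R̄], C² on (0,R̄), with X_*'(r) = −(1/κ) sin^{1−α}(s(r)) and X_*''(r) = −((1−α)/κ²) sin^{−2α}(s(r)) cos(s(r)) on (0,R̄), and |X_*'(r)|^{h−1} X_*''(r) = −(1/(h−1)) X_*(r) for r ∈ (0,R̄). -/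
open Set Real Topology Filter

theorem stmt_9 (h α κ : ℝ) (hh : 1 < h) (hα : α = (h-1)/(h+1))
    (hκ : 0 < κ) (hκh : κ ^ (h+1) = 2*α)
    (r : ℝ → ℝ) (hr : ∀ s : ℝ, r s = κ * ∫ σ in (0:ℝ)..s, Real.sin σ ^ α)
    (Rbar : ℝ) (hRbar : Rbar = r Real.pi)
    (s : ℝ → ℝ) (hs : ∀ σ ∈ Icc 0 Real.pi, s (r σ) = σ)
    (hs' : ∀ ρ ∈ Icc 0 Rbar, s ρ ∈ Icc 0 Real.pi ∧ r (s ρ) = ρ)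
    (X : ℝ → ℝ) (hX : ∀ ρ, X ρ = Real.cos (s ρ)) :
    ContDiffOn ℝ 1 X (Icc 0 Rbar) ∧
    ContDiffOn ℝ 2 X (Ioo 0 Rbar) ∧
    ∀ ρ ∈ Ioo 0 Rbar,
      deriv X ρ = -(1/κ) * Real.sin (s ρ) ^ (1-α) ∧
      deriv (deriv X) ρ = -((1-α)/κ^2) * Real.sin (s ρ) ^ (-(2*α)) * Real.cos (s ρ) ∧
      |deriv X ρ| ^ (h-1) * deriv (deriv X) ρ = -(1/(h-1)) * X ρ := by
  have hh1 : (0:ℝ) < h - 1 := by linarith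
  have hh2 : (0:ℝ) < h + 1 := by linarith
  have hα0 : 0 < α := by rw [hα]; positivity
  have hα1 : α < 1 := by rw [hα]; rw [div_lt_one hh2]; linarith
  have h1α : 0 < 1 - α := by linarith
  -- continuity of the integrand
  have hcont : Continuous fun σ : ℝ => Real.sin σ ^ α := by
    exact (Real.continuous_rpow_const hα0.le).comp Real.continuous_sin
  -- derivative of r
  have hrd : ∀ σ : ℝ, HasDerivAt r (κ * Real.sin σ ^ α) σ := by
    intro σ
    have : HasDerivAt (fun u => ∫ x in (0:ℝ)..u, Real.sin x ^ α) (Real.sin σ ^ α) σ :=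
      intervalIntegral.integral_hasDerivAt_right
        (hcont.intervalIntegrable 0 σ)
        (hcont.stronglyMeasurableAtFilter _ _)
        hcont.continuousAt
    have := this.const_mul κ
    convert this using 1
    · rfl
    · rfl
    · funext u; rw [hr u]
  have hrc : Continuous r :=
    continuous_iff_continuousAt.2 fun x => (hrd x).continuousAt
  have hr0 : r 0 = 0 := by rw [hr]; simp
  -- strict monotonicity of r on Icc 0 π
  have hrmono : StrictMonoOn r (Icc 0 Real.pi) := by
    apply strictMonoOn_of_deriv_pos (convex_Icc _ _) hrc.continuousOn
    intro x hx
    rw [interior_Icc] at hx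
    rw [(hrd x).deriv]
    have hsx : 0 < Real.sin x := Real.sin_pos_of_pos_of_lt_pi hx.1 hx.2
    positivity
  have hpi : (0:ℝ) < Real.pi := Real.pi_pos
  have hRpos : 0 < Rbar := by
    have := hrmono (left_mem_Icc.2 hpi.le) (right_mem_Icc.2 hpi.le) hpi
    rw [hr0] at this; rw [hRbar]; exact this
  have hs0 : s 0 = 0 := by
    have := hs 0 (left_mem_Icc.2 hpi.le); rwa [hr0] at this
  have hsR : s Rbar = Real.pi := by
    have := hs Real.pi (right_mem_Icc.2 hpi.le); rwa [← hRbar] at this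
  have hrmapsTo : MapsTo r (Icc 0 Real.pi) (Icc 0 Rbar) := by
    intro σ hσ
    constructor
    · rw [← hr0]; rcases eq_or_lt_of_le hσ.1 with he | hlt
      · rw [he]
      · exact (hrmono (left_mem_Icc.2 hpi.le) hσ hlt).le
    · rw [hRbar]; rcases eq_or_lt_of_le hσ.2 with he | hlt
      · rw [he]
      · exact (hrmono hσ (right_mem_Icc.2 hpi.le) hlt).le
  -- continuity of s on Icc 0 Rbar via compactness
  have hscont : ContinuousOn s (Icc 0 Rbar) := by
    let e : Icc 0 Real.pi ≃ Icc 0 Rbar :=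
      { toFun := fun σ => ⟨r σ, hrmapsTo σ.2⟩
        invFun := fun ρ => ⟨s ρ, (hs' ρ ρ.2).1⟩
        left_inv := fun σ => Subtype.ext (hs σ σ.2)
        right_inv := fun ρ => Subtype.ext (hs' ρ ρ.2).2 }
    have he : Continuous e := Continuous.subtype_mk (hrc.comp continuous_subtype_val) _
    have hsymm := (Continuous.homeoOfEquivCompactToT2 (f := e) he).symm.continuous
    rw [continuousOn_iff_continuous_restrict]
    exact continuous_subtype_val.comp hsymm
  -- location of s ρ for interior ρ
  have hsmem : ∀ ρ ∈ Ioo 0 Rbar, s ρ ∈ Ioo 0 Real.pi := by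
    intro ρ hρ
    obtain ⟨hmem, hrs⟩ := hs' ρ (Ioo_subset_Icc_self hρ)
    rcases eq_or_lt_of_le hmem.1 with he | hlt
    · exfalso; rw [← he, hr0] at hrs; exact hρ.1.ne hrs
    rcases eq_or_lt_of_le hmem.2 with he | hlt2
    · exfalso; rw [he, ← hRbar] at hrs; exact hρ.2.ne' hrs
    exact ⟨hlt, hlt2⟩
  have hsinpos : ∀ ρ ∈ Ioo 0 Rbar, 0 < Real.sin (s ρ) := fun ρ hρ =>
    Real.sin_pos_of_pos_of_lt_pi (hsmem ρ hρ).1 (hsmem ρ hρ).2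
  -- derivative of s on the interior
  have hsd : ∀ ρ ∈ Ioo 0 Rbar, HasDerivAt s (κ * Real.sin (s ρ) ^ α)⁻¹ ρ := by
    intro ρ hρ
    have hne : κ * Real.sin (s ρ) ^ α ≠ 0 := by
      have := hsinpos ρ hρ; positivity
    apply HasDerivAt.of_local_left_inverse
      ((hscont ρ (Ioo_subset_Icc_self hρ)).continuousAt
        (Icc_mem_nhds hρ.1 hρ.2))
      (hrd (s ρ)) hne
    filter_upwards [Ioo_mem_nhds hρ.1 hρ.2] with x hx
    exact (hs' x (Ioo_subset_Icc_self hx)).2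
  -- derivative of X on the interior
  have hXd : ∀ ρ ∈ Ioo 0 Rbar,
      HasDerivAt X (-(1/κ) * Real.sin (s ρ) ^ (1-α)) ρ := by
    intro ρ hρ
    have hc : HasDerivAt Real.cos (-Real.sin (s ρ)) (s ρ) := Real.hasDerivAt_cos (s ρ)
    have := hc.comp ρ (hsd ρ hρ)
    have hXe : X = Real.cos ∘ s := funext hX
    rw [← hXe] at this
    convert this using 1
    · rfl
    · rfl
    have hS := hsinpos ρ hρ
    rw [Real.rpow_sub hS, Real.rpow_one]
    field_simp
  -- second derivative on the interior
  have hXd2 : ∀ ρ ∈ Ioo 0 Rbar,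
      HasDerivAt (deriv X)
        (-((1-α)/κ^2) * Real.sin (s ρ) ^ (-(2*α)) * Real.cos (s ρ)) ρ := by
    intro ρ hρ
    have hS := hsinpos ρ hρ
    have h1 : HasDerivAt (fun x => Real.sin (s x))
        (Real.cos (s ρ) * (κ * Real.sin (s ρ) ^ α)⁻¹) ρ :=
      (Real.hasDerivAt_sin (s ρ)).comp ρ (hsd ρ hρ)
    have h2 : HasDerivAt (fun y : ℝ => y ^ (1-α))
        ((1-α) * Real.sin (s ρ) ^ (1-α-1)) (Real.sin (s ρ)) :=
      Real.hasDerivAt_rpow_const (Or.inl hS.ne')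
    have h3 := (h2.comp ρ h1).const_mul (-(1/κ))
    have h4 : HasDerivAt (fun x => -(1/κ) * Real.sin (s x) ^ (1-α))
        (-((1-α)/κ^2) * Real.sin (s ρ) ^ (-(2*α)) * Real.cos (s ρ)) ρ := by
      convert h3 using 1
      · rfl
      · rfl
      · rfl
      rw [show (1-α-1) = -α by ring, Real.rpow_neg hS.le (2*α),
        Real.rpow_neg hS.le α, show (2:ℝ)*α = α+α by ring, Real.rpow_add hS]
      have hSα : (0:ℝ) < Real.sin (s ρ) ^ α := Real.rpow_pos_of_pos hS α
      field_simp
    apply h4.congr_of_eventuallyEq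
    filter_upwards [Ioo_mem_nhds hρ.1 hρ.2] with x hx
    exact (hXd x hx).deriv
  -- continuity of X and of the first-derivative formula on the closed interval
  have hXcont : ContinuousOn X (Icc 0 Rbar) := by
    have : ContinuousOn (fun ρ => Real.cos (s ρ)) (Icc 0 Rbar) :=
      Real.continuous_cos.comp_continuousOn hscont
    exact this.congr fun x _ => hX x
  have hf1cont : ContinuousOn (fun x => -(1/κ) * Real.sin (s x) ^ (1-α)) (Icc 0 Rbar) :=
    continuousOn_const.mul
      ((Real.continuous_rpow_const h1α.le).comp_continuousOn
        (Real.continuous_sin.comp_continuousOn hscont))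
  have hf10 : -(1/κ) * Real.sin (s 0) ^ (1-α) = 0 := by
    rw [hs0, Real.sin_zero, Real.zero_rpow h1α.ne', mul_zero]
  have hf1R : -(1/κ) * Real.sin (s Rbar) ^ (1-α) = 0 := by
    rw [hsR, Real.sin_pi, Real.zero_rpow h1α.ne', mul_zero]
  have hXdiffIoo : DifferentiableOn ℝ X (Ioo 0 Rbar) :=
    fun x hx => (hXd x hx).differentiableAt.differentiableWithinAt
  -- derivative within the closed interval at every point
  have hXdW : ∀ ρ ∈ Icc 0 Rbar,
      HasDerivWithinAt X (-(1/κ) * Real.sin (s ρ) ^ (1-α)) (Icc 0 Rbar) ρ := by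
    intro ρ hρ
    rcases eq_or_lt_of_le hρ.1 with h0 | h0
    · -- left endpoint
      have hmem : Ioo 0 Rbar ∈ 𝓝[>] (0:ℝ) :=
        Ioo_mem_nhdsGT_of_mem (left_mem_Ico.2 hRpos)
      have hlim' : Filter.Tendsto (deriv X) (𝓝[>] (0:ℝ)) (𝓝 0) := by
        have hle : 𝓝[>] (0:ℝ) ≤ 𝓝[Icc 0 Rbar] 0 :=
          nhdsWithin_le_of_mem (Filter.mem_of_superset hmem Ioo_subset_Icc_self)
        have h1 : Filter.Tendsto (fun x => -(1/κ) * Real.sin (s x) ^ (1-α))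
            (𝓝[>] (0:ℝ)) (𝓝 0) := by
          have := (hf1cont 0 (left_mem_Icc.2 hRpos.le)).tendsto
          rw [hf10] at this
          exact this.mono_left hle
        apply h1.congr'
        filter_upwards [hmem] with x hx
        exact ((hXd x hx).deriv).symm
      have hW : HasDerivWithinAt X 0 (Ici (0:ℝ)) 0 :=
        hasDerivWithinAt_Ici_of_tendsto_deriv hXdiffIoo
          ((hXcont 0 (left_mem_Icc.2 hRpos.le)).mono Ioo_subset_Icc_self) hmem hlim'
      rw [← h0, hf10]
      exact hW.mono Icc_subset_Ici_self
    rcases eq_or_lt_of_le hρ.2 with hR | hR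
    · -- right endpoint
      have hmem : Ioo 0 Rbar ∈ 𝓝[<] Rbar :=
        Ioo_mem_nhdsLT_of_mem (right_mem_Ioc.2 hRpos)
      have hlim' : Filter.Tendsto (deriv X) (𝓝[<] Rbar) (𝓝 0) := by
        have hle : 𝓝[<] Rbar ≤ 𝓝[Icc 0 Rbar] Rbar :=
          nhdsWithin_le_of_mem (Filter.mem_of_superset hmem Ioo_subset_Icc_self)
        have h1 : Filter.Tendsto (fun x => -(1/κ) * Real.sin (s x) ^ (1-α))
            (𝓝[<] Rbar) (𝓝 0) := by
          have := (hf1cont Rbar (right_mem_Icc.2 hRpos.le)).tendsto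
          rw [hf1R] at this
          exact this.mono_left hle
        apply h1.congr'
        filter_upwards [hmem] with x hx
        exact ((hXd x hx).deriv).symm
      have hW : HasDerivWithinAt X 0 (Iic Rbar) Rbar :=
        hasDerivWithinAt_Iic_of_tendsto_deriv hXdiffIoo
          ((hXcont Rbar (right_mem_Icc.2 hRpos.le)).mono Ioo_subset_Icc_self) hmem hlim'
      rw [hR, hf1R]
      exact hW.mono Icc_subset_Iic_self
    · exact (hXd ρ ⟨h0, hR⟩).hasDerivWithinAt
  have huni : UniqueDiffOn ℝ (Icc (0:ℝ) Rbar) := uniqueDiffOn_Icc hRpos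
  have hC1 : ContDiffOn ℝ 1 X (Icc 0 Rbar) := by
    rw [show (1 : WithTop ℕ∞) = 0 + 1 from rfl, contDiffOn_succ_iff_derivWithin huni]
    refine ⟨fun ρ hρ => (hXdW ρ hρ).differentiableWithinAt, by simp, ?_⟩
    rw [contDiffOn_zero]
    apply hf1cont.congr
    intro ρ hρ
    exact (hXdW ρ hρ).derivWithin (huni ρ hρ)
  have hopen : IsOpen (Ioo (0:ℝ) Rbar) := isOpen_Ioo
  have hscontIoo : ContinuousOn s (Ioo 0 Rbar) := hscont.mono Ioo_subset_Icc_self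
  have hf2cont : ContinuousOn
      (fun x => -((1-α)/κ^2) * Real.sin (s x) ^ (-(2*α)) * Real.cos (s x)) (Ioo 0 Rbar) := by
    apply ContinuousOn.mul
    · apply ContinuousOn.mul continuousOn_const
      intro x hx
      exact (Real.continuous_sin.comp_continuousOn hscontIoo x hx).rpow_const
        (Or.inl (hsinpos x hx).ne')
    · exact Real.continuous_cos.comp_continuousOn hscontIoo
  have hC2 : ContDiffOn ℝ 2 X (Ioo 0 Rbar) := by
    rw [show (2 : WithTop ℕ∞) = 1 + 1 by norm_num, contDiffOn_succ_iff_deriv_of_isOpen hopen]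
    refine ⟨hXdiffIoo, by simp, ?_⟩
    rw [show (1 : WithTop ℕ∞) = 0 + 1 from rfl, contDiffOn_succ_iff_deriv_of_isOpen hopen]
    refine ⟨fun x hx => (hXd2 x hx).differentiableAt.differentiableWithinAt, by simp, ?_⟩
    rw [contDiffOn_zero]
    exact hf2cont.congr fun x hx => (hXd2 x hx).deriv
  refine ⟨hC1, hC2, fun ρ hρ => ?_⟩
  have hd1 := (hXd ρ hρ).deriv
  have hd2 := (hXd2 ρ hρ).deriv
  refine ⟨hd1, hd2, ?_⟩
  rw [hd1, hd2, hX]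
  have hS := hsinpos ρ hρ
  have habs : |(-(1/κ) * Real.sin (s ρ) ^ (1-α))| = (1/κ) * Real.sin (s ρ) ^ (1-α) := by
    rw [abs_mul, abs_neg, abs_of_pos (by positivity : (0:ℝ) < 1/κ),
      abs_of_pos (Real.rpow_pos_of_pos hS _)]
  have e1 : (1-α)*(h-1) = 2*α := by
    have hne : h + 1 ≠ 0 := hh2.ne'
    have hthis : α * (h+1) = h - 1 := by rw [hα, div_mul_cancel₀ _ hne]
    linear_combination -hthis
  have hrw : |(-(1/κ) * Real.sin (s ρ) ^ (1-α))| ^ (h-1)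
      = (κ ^ (h-1))⁻¹ * Real.sin (s ρ) ^ (2*α) := by
    rw [habs, Real.mul_rpow (by positivity) (Real.rpow_pos_of_pos hS _).le,
      one_div, Real.inv_rpow hκ.le, ← Real.rpow_mul hS.le, e1]
  rw [hrw]
  have hSsum : Real.sin (s ρ) ^ (2*α) * Real.sin (s ρ) ^ (-(2*α)) = 1 := by
    rw [← Real.rpow_add hS]; simp
  have hκsum : (κ ^ (h-1))⁻¹ * ((κ:ℝ)^2)⁻¹ = (2*α)⁻¹ := by
    have h2 : (κ:ℝ)^2 = κ ^ ((2:ℕ):ℝ) := (Real.rpow_natCast κ 2).symm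
    rw [h2, ← mul_inv, ← Real.rpow_add hκ]
    norm_num
    rw [show h - 1 + 2 = h + 1 by ring, hκh]
    rw [mul_inv]
    ring
  have e3 : (1-α)*(2*α)⁻¹ = 1/(h-1) := by
    rw [← div_eq_mul_inv, div_eq_div_iff (by positivity) hh1.ne']
    linarith [e1]
  calc (κ ^ (h-1))⁻¹ * Real.sin (s ρ) ^ (2*α) *
        (-((1-α)/κ^2) * Real.sin (s ρ) ^ (-(2*α)) * Real.cos (s ρ))
      = -((1-α) * ((κ ^ (h-1))⁻¹ * ((κ:ℝ)^2)⁻¹) *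
          (Real.sin (s ρ) ^ (2*α) * Real.sin (s ρ) ^ (-(2*α))) * Real.cos (s ρ)) := by
        rw [div_eq_mul_inv]; ring
    _ = -((1-α) * (2*α)⁻¹ * Real.cos (s ρ)) := by rw [hκsum, hSsum, mul_one]
    _ = -(1/(h-1)) * Real.cos (s ρ) := by rw [e3]; ring
end

section
/- Let h > 1, f(η) = (1/(|c| h)) (−c(h−1)η)^{h/(h−1)} defined for η with −cη > 0, where c ≠ 0. Then f satisfies |f'(η)|^{h−3} f'(η) f''(η) = −c on its domain. -/
open Set Real

theorem stmt_13 (h c : ℝ) (hh : 1 < h) (hc : c ≠ 0)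
    (f : ℝ → ℝ) (hf : ∀ η, f η = (1 / (|c| * h)) * (-c * (h-1) * η) ^ (h/(h-1))) :
    ∀ η : ℝ, 0 < -c * η →
      |deriv f η| ^ (h-3) * deriv f η * deriv (deriv f) η = -c := by
  have hh1 : (0:ℝ) < h - 1 := by linarith
  have hh0 : h ≠ 0 := by positivity
  have hcabs : |c| ≠ 0 := abs_ne_zero.mpr hc
  set b : ℝ := -c * (h-1) with hbdef
  set p : ℝ := h / (h-1) with hpdef
  have hp1 : (1:ℝ) ≤ p := by
    rw [hpdef, le_div_iff₀ hh1]; linarith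
  have hfe : f = fun η => (1 / (|c| * h)) * (b*η)^p := by
    funext x
    exact hf x
  have hpb : p * b = -c * h := by
    rw [hpdef, hbdef]; field_simp
  have hs : (1 / (|c| * h)) * (p * b) = -c/|c| := by
    rw [hpb]; field_simp
  have hderiv : deriv f = fun η => (-c/|c|) * (b*η)^(p-1) := by
    funext x
    have hg : HasDerivAt (fun η : ℝ => b*η) b x := by
      simpa using (hasDerivAt_id x).const_mul b
    have hd := ((hg.rpow_const (Or.inr hp1)).const_mul (1 / (|c| * h))).deriv
    rw [hfe, hd, ← hs]
    ring
  intro η hη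
  have hY : 0 < b * η := by
    have : b * η = (-c * η) * (h-1) := by rw [hbdef]; ring
    rw [this]; exact mul_pos hη hh1
  rw [hderiv]
  have hg : HasDerivAt (fun η : ℝ => b*η) b η := by
    simpa using (hasDerivAt_id η).const_mul b
  have hd2 := ((hg.rpow_const (p := p-1) (Or.inl (ne_of_gt hY))).const_mul (-c/|c|)).deriv
  beta_reduce
  rw [hd2]
  have habs : |(-c/|c|) * (b*η)^(p-1)| = (b*η)^(p-1) := by
    rw [abs_mul, abs_div, abs_neg, abs_abs, div_self hcabs, one_mul,
      abs_of_nonneg (Real.rpow_nonneg hY.le _)]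
  rw [habs, ← Real.rpow_mul hY.le]
  have hqb : (p-1)*b = -c := by rw [hpdef, hbdef]; field_simp; ring
  have hs2 : (-c/|c|) * (-c/|c|) = 1 := by
    rw [div_mul_div_comm, neg_mul_neg, ← sq, ← sq, sq_abs]
    exact div_self (pow_ne_zero 2 hc)
  have hexp : (p-1)*(h-3) + ((p-1) + (p-1-1)) = 0 := by
    rw [hpdef]; field_simp; ring
  calc (b*η)^((p-1)*(h-3)) * ((-c/|c|) * (b*η)^(p-1)) *
        ((-c/|c|) * (b * (p-1) * (b*η)^(p-1-1)))
      = ((-c/|c|) * (-c/|c|)) * ((p-1)*b) *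
        ((b*η)^((p-1)*(h-3)) * ((b*η)^(p-1) * (b*η)^(p-1-1))) := by ring
    _ = -c := by
        rw [hs2, hqb, ← Real.rpow_add hY, ← Real.rpow_add hY, hexp, Real.rpow_zero]
        ring
end

section
/- Let h > 1 and c_h = (1/2)^{1/(h−1)} ((h−1)/(h+1))^{h/(h−1)}. The function X(r) = c_h r^{(h+1)/(h−1)} satisfies |X'(r)|^{h−1} X''(r) = (1/(h−1)) X(r) for all r > 0. Consequently, for t < t₀, the function V(x,t) = c_h |x|^{(h+1)/(h−1)} (t₀ − t)^{−1/(h−1)} satisfies V_t = |DV|^{h−3} ⟨D²V DV, DV⟩ at every (x,t) with x ≠ 0 and t < t₀. -/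
open Set

variable {d : ℕ}

lemma myNormRpow {d : ℕ} (p : ℝ) {x : EuclideanSpace ℝ (Fin d)} (hx : x ≠ 0) :
    HasFDerivAt (fun y : EuclideanSpace ℝ (Fin d) => ‖y‖ ^ p)
      ((p * ‖x‖ ^ (p - 2)) • (innerSL ℝ x)) x := by
  have hN : (0:ℝ) < ‖x‖ := norm_pos_iff.mpr hx
  have hinner : HasFDerivAt (fun y : EuclideanSpace ℝ (Fin d) => (inner ℝ y y : ℝ))
      ((2:ℝ) • innerSL ℝ x) x := by
    have := (hasFDerivAt_id x).inner ℝ (hasFDerivAt_id x)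
    refine this.congr_fderiv ?_
    symm
    ext v
    simp only [ContinuousLinearMap.smul_apply, innerSL_apply_apply, fderivInnerCLM_apply,
      ContinuousLinearMap.comp_apply, ContinuousLinearMap.prod_apply,
      ContinuousLinearMap.id_apply, smul_eq_mul, id_eq]
    rw [real_inner_comm v x]
    ring
  have h0 : (inner ℝ x x : ℝ) ≠ 0 := by
    rw [real_inner_self_eq_norm_sq]; positivity
  have key := HasDerivAt.comp_hasFDerivAt (f := fun y : EuclideanSpace ℝ (Fin d) => (inner ℝ y y : ℝ)) x (Real.hasDerivAt_rpow_const (p := p/2) (Or.inl h0)) hinner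
  have hfun : ((fun s : ℝ => s ^ (p/2)) ∘ fun y : EuclideanSpace ℝ (Fin d) => (inner ℝ y y : ℝ))
      = fun y : EuclideanSpace ℝ (Fin d) => ‖y‖ ^ p := by
    funext y
    simp only [Function.comp_apply, real_inner_self_eq_norm_sq]
    rw [← Real.rpow_natCast ‖y‖ 2, ← Real.rpow_mul (norm_nonneg y)]
    congr 1
    push_cast
    ring
  rw [hfun] at key
  refine key.congr_fderiv ?_
  symm
  ext v
  simp only [ContinuousLinearMap.smul_apply, innerSL_apply_apply, smul_eq_mul]
  rw [real_inner_self_eq_norm_sq, ← Real.rpow_natCast ‖x‖ 2, ← Real.rpow_mul (norm_nonneg x)]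
  push_cast
  rw [show (2:ℝ) * (p/2 - 1) = p - 2 by ring]
  ring

lemma gradient_const_mul_norm_rpow {d : ℕ} (c p : ℝ) {x : EuclideanSpace ℝ (Fin d)} (hx : x ≠ 0) :
    gradient (fun y : EuclideanSpace ℝ (Fin d) => c * ‖y‖ ^ p) x
      = (c * p * ‖x‖ ^ (p - 2)) • x := by
  have h1 := (myNormRpow p hx).const_mul c
  have h2 : HasGradientAt (fun y : EuclideanSpace ℝ (Fin d) => c * ‖y‖ ^ p)
      ((c * p * ‖x‖ ^ (p - 2)) • x) x := by
    rw [hasGradientAt_iff_hasFDerivAt]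
    refine h1.congr_fderiv ?_
    symm
    ext v
    simp [InnerProductSpace.toDual_apply_apply, inner_smul_left]
    ring
  exact h2.gradient

theorem stmt_19 (h t₀ : ℝ) (hh : 1 < h)
    (ch : ℝ) (hch : ch = (1/2 : ℝ) ^ (1/(h-1)) * ((h-1)/(h+1)) ^ (h/(h-1)))
    (X : ℝ → ℝ) (hX : ∀ r, X r = ch * r ^ ((h+1)/(h-1))) :
    (∀ r > (0:ℝ), |deriv X r| ^ (h-1) * deriv (deriv X) r = (1/(h-1)) * X r) ∧
    (∀ (x : EuclideanSpace ℝ (Fin d)) (t : ℝ), x ≠ 0 → t < t₀ →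
      solvesAt h
        (fun p : EuclideanSpace ℝ (Fin d) × ℝ =>
          ch * ‖p.1‖ ^ ((h+1)/(h-1)) * (t₀ - p.2) ^ (-(1/(h-1)))) (x, t)) := by
  have h1 : (0:ℝ) < h - 1 := by linarith
  have hp1 : (0:ℝ) < h + 1 := by linarith
  set α : ℝ := (h+1)/(h-1) with hαdef
  have hα : 0 < α := div_pos hp1 h1
  have hrr : (0:ℝ) < (h-1)/(h+1) := div_pos h1 hp1
  have hch0 : 0 < ch := by
    rw [hch]
    exact mul_pos (Real.rpow_pos_of_pos one_half_pos _) (Real.rpow_pos_of_pos hrr _)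
  have e2 : (α - 1) * (h - 1) = 2 := by
    rw [hαdef]; field_simp; norm_num
  have e1 : ch ^ (h-1) = (1/2) * ((h-1)/(h+1)) ^ h := by
    rw [hch, Real.mul_rpow (Real.rpow_pos_of_pos one_half_pos _).le
        (Real.rpow_pos_of_pos hrr _).le,
      ← Real.rpow_mul (by norm_num : (0:ℝ) ≤ 1/2), ← Real.rpow_mul hrr.le,
      show 1/(h-1) * (h-1) = 1 by field_simp,
      show h/(h-1) * (h-1) = h by field_simp, Real.rpow_one]
  have e3 : ((h-1)/(h+1)) ^ h * α ^ h = 1 := by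
    rw [← Real.mul_rpow hrr.le hα.le, show (h-1)/(h+1) * α = 1 by rw [hαdef]; field_simp,
      Real.one_rpow]
  have hkey : ch ^ (h-1) * (α ^ h * ((α - 1) * (h-1))) = 1 := by
    calc ch ^ (h-1) * (α ^ h * ((α - 1) * (h-1)))
        = (1/2) * (((h-1)/(h+1)) ^ h * α ^ h) * ((α-1)*(h-1)) := by rw [e1]; ring
      _ = (1/2) * 1 * 2 := by rw [e3, e2]
      _ = 1 := by norm_num
  have hkey2 : ch ^ (h-1) * α ^ h * (α - 1) = 1/(h-1) := by
    rw [eq_div_iff h1.ne']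
    linear_combination hkey
  constructor
  ·
    intro r hr
    have hXfun : X = fun s => ch * s ^ α := funext hX
    have hderiv1 : ∀ s ∈ Set.Ioi (0:ℝ), deriv X s = ch * (α * s ^ (α-1)) := by
      intro s hs
      rw [hXfun]
      exact (((Real.hasDerivAt_rpow_const (Or.inl (ne_of_gt hs)))).const_mul ch).deriv
    have hd2 : deriv X =ᶠ[nhds r] fun s => ch * (α * s ^ (α-1)) :=
      Filter.eventuallyEq_of_mem (isOpen_Ioi.mem_nhds hr) hderiv1
    have hdd : deriv (deriv X) r = ch * (α * ((α-1) * r ^ (α-1-1))) := by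
      rw [hd2.deriv_eq]
      exact (((Real.hasDerivAt_rpow_const (p := α-1) (Or.inl hr.ne')).const_mul α).const_mul
        ch).deriv
    rw [hderiv1 r hr, hdd, hX r]
    have hpos : 0 < ch * (α * r ^ (α-1)) :=
      mul_pos hch0 (mul_pos hα (Real.rpow_pos_of_pos hr _))
    rw [abs_of_pos hpos]
    rw [Real.mul_rpow hch0.le (by positivity), Real.mul_rpow hα.le (Real.rpow_pos_of_pos hr _).le,
      ← Real.rpow_mul hr.le, e2]
    have hr2 : r ^ (2:ℝ) * r ^ (α-1-1) = r ^ α := by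
      rw [← Real.rpow_add hr]; congr 1; ring
    have hα2 : α ^ (h-1) * α = α ^ h := by
      rw [← Real.rpow_add_one hα.ne']; congr 1; ring
    linear_combination (ch ^ (h-1) * α ^ (h-1) * ch * α * (α-1)) * hr2
      + (ch * (α-1) * r ^ α * ch ^ (h-1)) * hα2 + (ch * r ^ α) * hkey2
  ·
    intro x t hx ht
    have hs : (0:ℝ) < t₀ - t := by linarith
    have hN : 0 < ‖x‖ := norm_pos_iff.mpr hx
    set c : ℝ := ch * (t₀ - t) ^ (-(1/(h-1))) with hcdef
    have hc0 : 0 < c := mul_pos hch0 (Real.rpow_pos_of_pos hs _)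
    have hgfun : (fun y : EuclideanSpace ℝ (Fin d) => ch * ‖y‖ ^ α * (t₀ - t) ^ (-(1/(h-1))))
        = fun y => c * ‖y‖ ^ α := by funext y; rw [hcdef]; ring
    have hGy : ∀ y : EuclideanSpace ℝ (Fin d), y ≠ 0 →
        gradient (fun y : EuclideanSpace ℝ (Fin d) => c * ‖y‖ ^ α) y
          = (c * α * ‖y‖ ^ (α-2)) • y := fun y hy => gradient_const_mul_norm_rpow c α hy
    have hEv : gradient (fun y : EuclideanSpace ℝ (Fin d) => c * ‖y‖ ^ α)
        =ᶠ[nhds x] fun y => (c * α * ‖y‖ ^ (α-2)) • y :=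
      Filter.eventuallyEq_of_mem (isOpen_compl_singleton.mem_nhds hx) (fun y hy => hGy y hy)
    have hc' := (myNormRpow (d := d) (α-2) hx).const_mul (c*α)
    have hS2 : HasFDerivAt (fun y : EuclideanSpace ℝ (Fin d) => (c * α * ‖y‖ ^ (α-2)) • y)
        ((c * α * ‖x‖ ^ (α-2)) • ContinuousLinearMap.id ℝ (EuclideanSpace ℝ (Fin d))
          + ((c*α) • (((α-2) * ‖x‖ ^ (α-2-2)) • innerSL ℝ x)).smulRight x) x :=
      hc'.smul (hasFDerivAt_id x)
    have hfder := hEv.fderiv_eq.trans hS2.fderiv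
    have hT : HasDerivAt (fun τ : ℝ => ch * ‖x‖ ^ α * (t₀ - τ) ^ (-(1/(h-1))))
        (ch * ‖x‖ ^ α * (-1 * (-(1/(h-1))) * (t₀ - t) ^ (-(1/(h-1)) - 1))) t :=
      (((hasDerivAt_id t).const_sub t₀).rpow_const (Or.inl hs.ne')).const_mul (ch * ‖x‖ ^ α)
    have hGne : (c * α * ‖x‖ ^ (α-2)) • x ≠ 0 :=
      smul_ne_zero (ne_of_gt (mul_pos (mul_pos hc0 hα) (Real.rpow_pos_of_pos hN _))) hx
    unfold solvesAt infLapH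
    simp only
    rw [hgfun, hT.deriv, hGy x hx, if_neg hGne, hfder]
    simp only [ContinuousLinearMap.add_apply, ContinuousLinearMap.smul_apply,
      ContinuousLinearMap.id_apply, ContinuousLinearMap.smulRight_apply, innerSL_apply_apply,
      smul_eq_mul, inner_add_left, real_inner_smul_left, real_inner_smul_right,
      real_inner_self_eq_norm_sq, norm_smul, Real.norm_eq_abs]
    rw [abs_of_pos (mul_pos (mul_pos hc0 hα) (Real.rpow_pos_of_pos hN _))]
    rw [Real.mul_rpow (mul_pos (mul_pos hc0 hα) (Real.rpow_pos_of_pos hN _)).le (norm_nonneg x),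
      Real.mul_rpow (mul_pos hc0 hα).le (Real.rpow_nonneg (norm_nonneg x) _),
      ← Real.rpow_mul (norm_nonneg x)]
    have Nc : ∀ a b : ℝ, ‖x‖ ^ a * ‖x‖ ^ b = ‖x‖ ^ (a+b) :=
      fun a b => (Real.rpow_add hN a b).symm
    have hexp : ∀ e : ℝ, (α-2)*(h-3) + e = α → ‖x‖ ^ ((α-2)*(h-3)) * ‖x‖ ^ e = ‖x‖ ^ α := by
      intro e he; rw [Nc, he]
    have E1 : ‖x‖ ^ ((α-2)*(h-3)) * (‖x‖ ^ (h-3) *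
        (‖x‖ ^ (α-2) * (‖x‖ ^ (α-2) * (‖x‖ ^ (α-2) * ‖x‖ ^ 2)))) = ‖x‖ ^ α := by
      rw [← Real.rpow_natCast ‖x‖ 2]
      simp only [Nc]
      congr 1
      push_cast
      rw [hαdef]
      field_simp
      ring
    have E2 : ‖x‖ ^ ((α-2)*(h-3)) * (‖x‖ ^ (h-3) * (‖x‖ ^ (α-2) *
        (‖x‖ ^ (α-2-2) * (‖x‖ ^ (α-2) * (‖x‖ ^ 2 * ‖x‖ ^ 2))))) = ‖x‖ ^ α := by
      rw [← Real.rpow_natCast ‖x‖ 2]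
      simp only [Nc]
      congr 1
      push_cast
      rw [hαdef]
      field_simp
      ring
    have E3 : (c*α) ^ (h-3) * ((c*α)*((c*α)*(c*α))) = (c*α) ^ h := by
      rw [show (c*α)*((c*α)*(c*α)) = (c*α) ^ (3:ℕ) by ring, ← Real.rpow_natCast (c*α) 3,
        ← Real.rpow_add (mul_pos hc0 hα)]
      norm_num
    have Ech : ch ^ h = ch ^ (h-1) * ch := by
      rw [← Real.rpow_add_one hch0.ne' (h-1)]; congr 1; ring
    have Es : (-(1/(h-1))) * h = -(1/(h-1)) - 1 := by field_simp; ring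
    have E4 : (c*α) ^ h = ch ^ (h-1) * ch * (α ^ h * (t₀-t) ^ (-(1/(h-1)) - 1)) := by
      calc (c*α) ^ h = c ^ h * α ^ h := Real.mul_rpow hc0.le hα.le
        _ = ch ^ h * (t₀-t) ^ ((-(1/(h-1))) * h) * α ^ h := by
            rw [hcdef, Real.mul_rpow hch0.le (Real.rpow_pos_of_pos hs _).le,
              ← Real.rpow_mul hs.le]
        _ = ch ^ (h-1) * ch * (α ^ h * (t₀-t) ^ (-(1/(h-1)) - 1)) := by
            rw [Ech, Es]; ring
    have e2 : (α - 1) * (h - 1) = 2 := by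
      rw [hαdef]; field_simp; norm_num
    have e1 : ch ^ (h-1) = (1/2) * ((h-1)/(h+1)) ^ h := by
      rw [hch, Real.mul_rpow (Real.rpow_pos_of_pos one_half_pos _).le
          (Real.rpow_pos_of_pos hrr _).le,
        ← Real.rpow_mul (by norm_num : (0:ℝ) ≤ 1/2), ← Real.rpow_mul hrr.le,
        show 1/(h-1) * (h-1) = 1 by field_simp,
        show h/(h-1) * (h-1) = h by field_simp, Real.rpow_one]
    have e3 : ((h-1)/(h+1)) ^ h * α ^ h = 1 := by
      rw [← Real.mul_rpow hrr.le hα.le, show (h-1)/(h+1) * α = 1 by rw [hαdef]; field_simp,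
        Real.one_rpow]
    have hkey : ch ^ (h-1) * (α ^ h * ((α - 1) * (h-1))) = 1 := by
      calc ch ^ (h-1) * (α ^ h * ((α - 1) * (h-1)))
          = (1/2) * (((h-1)/(h+1)) ^ h * α ^ h) * ((α-1)*(h-1)) := by rw [e1]; ring
        _ = (1/2) * 1 * 2 := by rw [e3, e2]
        _ = 1 := by norm_num
    have E5 : ch ^ (h-1) * α ^ h * (α - 1) = 1/(h-1) := by
      rw [eq_div_iff h1.ne']
      linear_combination hkey
    linear_combination (-((c*α) ^ (h-3) * ((c*α)*((c*α)*(c*α))))) * E1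
      + (-((c*α) ^ (h-3) * ((c*α)*((c*α)*(c*α))) * (α-2))) * E2
      + (-((α-1) * ‖x‖ ^ α)) * E3
      + (-((α-1) * ‖x‖ ^ α)) * E4
      + (-(ch * ‖x‖ ^ α * (t₀-t) ^ (-(1/(h-1)) - 1))) * E5
end
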